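/- arXiv:2505.11747 — 3 statements merged into one kernel-verified Lean document; each statement's English description precedes it below -/
import Mathlib

section
/- For any signs ε₁, ε₂ ∈ {1,−1}, the real Cayley–Dickson algebra 𝔸₂ with sign vector (ε₁,ε₂) is isomorphic as an ℝ-algebra to the quaternion algebra ℍ[ℝ, −ε₁, −ε₂], i.e. the ℝ-algebra with basis 1, i, j, k satisfying i² = −ε₁, j² = −ε₂, i·j = k and i·j = −j·i. -/
noncomputable section

/-- The real Cayley–Dickson algebra carrier: `CD 0 = ℝ`, `CD (n+1) = CD n × CD n`. -/
def CD : ℕ → Type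
  | 0 => ℝ
  | n + 1 => CD n × CD n

instance CD.instAddCommGroup : (n : ℕ) → AddCommGroup (CD n)
  | 0 => inferInstanceAs (AddCommGroup ℝ)
  | n + 1 =>
    letI := CD.instAddCommGroup n
    inferInstanceAs (AddCommGroup (CD n × CD n))

instance CD.instModule : (n : ℕ) → Module ℝ (CD n)
  | 0 => inferInstanceAs (Module ℝ ℝ)
  | n + 1 =>
    letI := CD.instModule n
    inferInstanceAs (Module ℝ (CD n × CD n))

/-- The unit of the Cayley–Dickson algebra. -/
def CD.one : (n : ℕ) → CD n
  | 0 => (1 : ℝ)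
  | n + 1 => (CD.one n, 0)

/-- Conjugation: `(a, b)* = (a*, -b)`, identity on `ℝ`. -/
def CD.conj : (n : ℕ) → CD n → CD n
  | 0, a => a
  | n + 1, x => (CD.conj n x.1, -x.2)

/-- Cayley–Dickson multiplication with sign vector `ε`:
`(a,b)·(c,d) = (a·c − ε (n+1) • (d*·b), d·a + b·c*)`. -/
def CD.mul (ε : ℕ → ℝ) : (n : ℕ) → CD n → CD n → CD n
  | 0, a, c => (show ℝ from a) * (show ℝ from c)
  | n + 1, x, y =>
    (CD.mul ε n x.1 y.1 - ε (n + 1) • CD.mul ε n (CD.conj n y.2) x.2,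
     CD.mul ε n y.2 x.1 + CD.mul ε n x.2 (CD.conj n y.1))

/-- The standard basis element `e α` of `CD n`, for `α ⊆ {1,…,n}`. -/
def CD.basis : (n : ℕ) → Finset ℕ → CD n
  | 0, _ => (1 : ℝ)
  | n + 1, α =>
    if n + 1 ∈ α then ((0 : CD n), CD.basis n (α.erase (n + 1)))
    else (CD.basis n α, (0 : CD n))

/-- `α` indexes a pure basis element of `CD n`. -/
def CD.IsPure (n : ℕ) (α : Finset ℕ) : Prop :=
  α.Nonempty ∧ α ⊆ Finset.Icc 1 n

/-- The associator `[x,y,z] = (x·y)·z − x·(y·z)`. -/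
def CD.assoc (ε : ℕ → ℝ) (n : ℕ) (x y z : CD n) : CD n :=
  CD.mul ε n (CD.mul ε n x y) z - CD.mul ε n x (CD.mul ε n y z)

/-- A triad: indices of three pairwise distinct pure basis elements `b, c, d`
with `d ≠ ±(b·c)` (all signs `εᵢ = 1`). -/
def CD.IsTriad (n : ℕ) (α β γ : Finset ℕ) : Prop :=
  CD.IsPure n α ∧ CD.IsPure n β ∧ CD.IsPure n γ ∧
  α ≠ β ∧ α ≠ γ ∧ β ≠ γ ∧
  CD.basis n γ ≠ CD.mul (fun _ => 1) n (CD.basis n α) (CD.basis n β) ∧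
  CD.basis n γ ≠ -CD.mul (fun _ => 1) n (CD.basis n α) (CD.basis n β)

/-- Multiplication with all signs `εᵢ = 1`. -/
abbrev CD.mul1 (n : ℕ) : CD n → CD n → CD n := CD.mul (fun _ => 1) n

/-- Associator with all signs `εᵢ = 1`. -/
abbrev CD.assoc1 (n : ℕ) : CD n → CD n → CD n → CD n := CD.assoc (fun _ => 1) n

lemma CD1_sub_fst (a b : CD 1) : (a - b).1 = a.1 - b.1 := rfl
lemma CD1_sub_snd (a b : CD 1) : (a - b).2 = a.2 - b.2 := rfl
lemma CD1_add_fst (a b : CD 1) : (a + b).1 = a.1 + b.1 := rfl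
lemma CD1_add_snd (a b : CD 1) : (a + b).2 = a.2 + b.2 := rfl
lemma CD1_smul_fst (r : ℝ) (a : CD 1) : (r • a).1 = (r * (show ℝ from a.1) : ℝ) := rfl
lemma CD1_smul_snd (r : ℝ) (a : CD 1) : (r • a).2 = (r * (show ℝ from a.2) : ℝ) := rfl

/-- For signs `ε₁, ε₂ ∈ {1,−1}`, the Cayley–Dickson algebra `𝔸₂`
with sign vector `(ε₁,ε₂)` is ℝ-algebra isomorphic to `ℍ[ℝ, −ε₁, −ε₂]`. -/
theorem stmt3 (ε : ℕ → ℝ) (h1 : ε 1 = 1 ∨ ε 1 = -1) (h2 : ε 2 = 1 ∨ ε 2 = -1) :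
    ∃ f : CD 2 ≃ₗ[ℝ] QuaternionAlgebra ℝ (-ε 1) 0 (-ε 2),
      f (CD.one 2) = 1 ∧ ∀ x y : CD 2, f (CD.mul ε 2 x y) = f x * f y := by

  refine ⟨{ toFun := fun x => ⟨x.1.1, x.1.2, x.2.1, x.2.2⟩
            invFun := fun q => ((q.re, q.imI), (q.imJ, q.imK))
            map_add' := fun x y => rfl
            map_smul' := fun r x => rfl
            left_inv := fun x => rfl
            right_inv := fun q => rfl }, rfl, fun x y => ?_⟩
  show (⟨(show ℝ from x.1.1) * (show ℝ from y.1.1) - ε 1 * ((show ℝ from y.1.2) * (show ℝ from x.1.2)) - ε 2 * ((show ℝ from y.2.1) * (show ℝ from x.2.1) - ε 1 * ((show ℝ from x.2.2) * -(show ℝ from y.2.2))),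
      (show ℝ from y.1.2) * (show ℝ from x.1.1) + (show ℝ from x.1.2) * (show ℝ from y.1.1) - ε 2 * ((show ℝ from x.2.2) * (show ℝ from y.2.1) + -(show ℝ from y.2.2) * (show ℝ from x.2.1)),
      (show ℝ from y.2.1) * (show ℝ from x.1.1) - ε 1 * ((show ℝ from x.1.2) * (show ℝ from y.2.2)) + ((show ℝ from x.2.1) * (show ℝ from y.1.1) - ε 1 * (-(show ℝ from y.1.2) * (show ℝ from x.2.2))),
      (show ℝ from x.1.2) * (show ℝ from y.2.1) + (show ℝ from y.2.2) * (show ℝ from x.1.1) + (-(show ℝ from y.1.2) * (show ℝ from x.2.1) + (show ℝ from x.2.2) * (show ℝ from y.1.1))⟩ : QuaternionAlgebra ℝ (-ε 1) 0 (-ε 2)) = (⟨(show ℝ from x.1.1), (show ℝ from x.1.2), (show ℝ from x.2.1), (show ℝ from x.2.2)⟩ : QuaternionAlgebra ℝ (-ε 1) 0 (-ε 2)) * ⟨(show ℝ from y.1.1), (show ℝ from y.1.2), (show ℝ from y.2.1), (show ℝ from y.2.2)⟩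
  rw [QuaternionAlgebra.mk_mul_mk]
  generalize (show ℝ from x.1.1) = x11 at *
  generalize (show ℝ from x.1.2) = x12 at *
  generalize (show ℝ from x.2.1) = x21 at *
  generalize (show ℝ from x.2.2) = x22 at *
  generalize (show ℝ from y.1.1) = y11 at *
  generalize (show ℝ from y.1.2) = y12 at *
  generalize (show ℝ from y.2.1) = y21 at *
  generalize (show ℝ from y.2.2) = y22 at *
  ext <;> dsimp only <;> ring
end
end

section
/- With all signs εᵢ = 1, for any two distinct pure basis elements x, y of the real Cayley–Dickson algebra 𝔸ₙ one has (y·x)·x = −y, x·(x·y) = −y, and the flexible law (x·y)·x = x·(y·x). -/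
noncomputable section

namespace CDaux

lemma mul1_succ (n : ℕ) (a b c d : CD n) :
    CD.mul1 (n+1) (a, b) (c, d) =
      (CD.mul1 n a c - CD.mul1 n (CD.conj n d) b,
       CD.mul1 n d a + CD.mul1 n b (CD.conj n c)) := by
  show (_ - (1:ℝ) • _, _) = _
  rw [one_smul]

lemma pair_eq {n : ℕ} {a b c d : CD n} (h1 : a = c) (h2 : b = d) :
    ((a, b) : CD (n+1)) = (c, d) := by rw [h1, h2]

lemma neg_pair (n : ℕ) (a b : CD n) : -((a, b) : CD (n+1)) = (-a, -b) := rfl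

lemma neg_pair' (n : ℕ) (a b : CD n) :
    -(show CD (n+1) from (a, b)) = (show CD (n+1) from (-a, -b)) := rfl

lemma conj_zero : ∀ n, CD.conj n (0 : CD n) = 0
  | 0 => rfl
  | n+1 => by
    show ((CD.conj n 0, -(0 : CD n)) : CD (n+1)) = ((0, 0) : CD (n+1))
    rw [conj_zero n, neg_zero]

lemma conj_neg : ∀ n (x : CD n), CD.conj n (-x) = -CD.conj n x
  | 0, x => rfl
  | n+1, x => by
    show ((CD.conj n (-x.1), -(-x.2)) : CD (n+1)) = (-(CD.conj n x.1), -(-x.2))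
    rw [conj_neg n]

lemma conj_add : ∀ n (x y : CD n), CD.conj n (x + y) = CD.conj n x + CD.conj n y
  | 0, x, y => rfl
  | n+1, x, y => by
    show ((CD.conj n (x.1 + y.1), -(x.2 + y.2)) : CD (n+1))
        = (CD.conj n x.1 + CD.conj n y.1, -x.2 + -y.2)
    rw [conj_add n, neg_add]

lemma conj_sub (n : ℕ) (x y : CD n) : CD.conj n (x - y) = CD.conj n x - CD.conj n y := by
  rw [sub_eq_add_neg, conj_add, conj_neg, ← sub_eq_add_neg]

lemma conj_conj : ∀ n (x : CD n), CD.conj n (CD.conj n x) = x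
  | 0, x => rfl
  | n+1, x => by
    show ((CD.conj n (CD.conj n x.1), -(-x.2)) : CD (n+1)) = (x.1, x.2)
    rw [conj_conj n, neg_neg]

lemma conj_one : ∀ n, CD.conj n (CD.one n) = CD.one n
  | 0 => rfl
  | n+1 => by
    show ((CD.conj n (CD.one n), -(0 : CD n)) : CD (n+1)) = (CD.one n, 0)
    rw [conj_one n, neg_zero]

lemma mul_zero_zero : ∀ n (x : CD n), CD.mul1 n x 0 = 0 ∧ CD.mul1 n 0 x = 0
  | 0, x => ⟨by exact mul_zero (show ℝ from x), by exact zero_mul (show ℝ from x)⟩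
  | n+1, x => by
    constructor
    · show CD.mul1 (n+1) (x.1, x.2) ((0, 0) : CD n × CD n) = ((0, 0) : CD (n+1))
      rw [mul1_succ, conj_zero, (mul_zero_zero n x.1).1, (mul_zero_zero n x.2).2,
        (mul_zero_zero n x.1).2, (mul_zero_zero n x.2).1, sub_zero, add_zero]
    · show CD.mul1 (n+1) ((0, 0) : CD n × CD n) (x.1, x.2) = ((0, 0) : CD (n+1))
      rw [mul1_succ, (mul_zero_zero n x.1).2, (mul_zero_zero n (CD.conj n x.2)).1,
        (mul_zero_zero n x.2).1, (mul_zero_zero n (CD.conj n x.1)).2, sub_zero, add_zero]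

lemma mul_zero' (n : ℕ) (x : CD n) : CD.mul1 n x 0 = 0 := (mul_zero_zero n x).1
lemma zero_mul' (n : ℕ) (x : CD n) : CD.mul1 n 0 x = 0 := (mul_zero_zero n x).2

lemma mul_neg_neg : ∀ n (x y : CD n),
    CD.mul1 n x (-y) = -CD.mul1 n x y ∧ CD.mul1 n (-x) y = -CD.mul1 n x y
  | 0, x, y => ⟨by exact mul_neg (show ℝ from x) (show ℝ from y), by exact neg_mul (show ℝ from x) (show ℝ from y)⟩
  | n+1, x, y => by
    constructor
    · show CD.mul1 (n+1) (x.1, x.2) (-y.1, -y.2) = -CD.mul1 (n+1) (x.1, x.2) (y.1, y.2)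
      rw [mul1_succ, mul1_succ, conj_neg, conj_neg, (mul_neg_neg n x.1 y.1).1,
        (mul_neg_neg n (CD.conj n y.2) x.2).2, (mul_neg_neg n y.2 x.1).2,
        (mul_neg_neg n x.2 (CD.conj n y.1)).1]
      exact (pair_eq (by abel) (by abel)).trans (neg_pair n _ _).symm
    · show CD.mul1 (n+1) (-x.1, -x.2) (y.1, y.2) = -CD.mul1 (n+1) (x.1, x.2) (y.1, y.2)
      rw [mul1_succ, mul1_succ, (mul_neg_neg n x.1 y.1).2,
        (mul_neg_neg n (CD.conj n y.2) x.2).1, (mul_neg_neg n y.2 x.1).1,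
        (mul_neg_neg n x.2 (CD.conj n y.1)).2]
      exact (pair_eq (by abel) (by abel)).trans (neg_pair n _ _).symm

lemma mul_neg' (n : ℕ) (x y : CD n) : CD.mul1 n x (-y) = -CD.mul1 n x y := (mul_neg_neg n x y).1
lemma neg_mul' (n : ℕ) (x y : CD n) : CD.mul1 n (-x) y = -CD.mul1 n x y := (mul_neg_neg n x y).2

lemma one_mul_one : ∀ n (x : CD n), CD.mul1 n (CD.one n) x = x ∧ CD.mul1 n x (CD.one n) = x
  | 0, x => ⟨by exact one_mul (show ℝ from x), by exact mul_one (show ℝ from x)⟩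
  | n+1, x => by
    constructor
    · show CD.mul1 (n+1) (CD.one n, (0 : CD n)) (x.1, x.2) = (x.1, x.2)
      rw [mul1_succ, (mul_zero_zero n (CD.conj n x.2)).1, (one_mul_one n x.1).1,
        (one_mul_one n x.2).2, (mul_zero_zero n (CD.conj n x.1)).2, sub_zero, add_zero]
    · show CD.mul1 (n+1) (x.1, x.2) (CD.one n, (0 : CD n)) = (x.1, x.2)
      rw [mul1_succ, conj_zero, conj_one, (mul_zero_zero n x.2).2, (one_mul_one n x.1).2,
        (one_mul_one n x.2).2, (mul_zero_zero n x.1).2, sub_zero, zero_add]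

lemma one_mul' (n : ℕ) (x : CD n) : CD.mul1 n (CD.one n) x = x := (one_mul_one n x).1
lemma mul_one' (n : ℕ) (x : CD n) : CD.mul1 n x (CD.one n) = x := (one_mul_one n x).2

lemma conj_mul : ∀ n (x y : CD n),
    CD.conj n (CD.mul1 n x y) = CD.mul1 n (CD.conj n y) (CD.conj n x)
  | 0, x, y => mul_comm (show ℝ from x) (show ℝ from y)
  | n+1, x, y => by
    have h1 : CD.mul1 (n+1) (x.1, x.2) (y.1, y.2) =
        (CD.mul1 n x.1 y.1 - CD.mul1 n (CD.conj n y.2) x.2,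
         CD.mul1 n y.2 x.1 + CD.mul1 n x.2 (CD.conj n y.1)) := mul1_succ n _ _ _ _
    show CD.conj (n+1) (CD.mul1 (n+1) (x.1, x.2) (y.1, y.2)) =
      CD.mul1 (n+1) (CD.conj n y.1, -y.2) (CD.conj n x.1, -x.2)
    rw [h1, mul1_succ]
    show ((CD.conj n (CD.mul1 n x.1 y.1 - CD.mul1 n (CD.conj n y.2) x.2),
        -(CD.mul1 n y.2 x.1 + CD.mul1 n x.2 (CD.conj n y.1))) : CD (n+1)) = _
    simp only [conj_sub, conj_mul n, conj_conj, conj_neg, neg_mul', mul_neg', neg_neg]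
    exact pair_eq rfl (by abel)

lemma basis_empty : ∀ n, CD.basis n ∅ = CD.one n
  | 0 => rfl
  | n+1 => by
    show (if n + 1 ∈ (∅ : Finset ℕ) then _ else (CD.basis n ∅, (0 : CD n))) = ((CD.one n, 0) : CD (n+1))
    rw [if_neg (Finset.notMem_empty _), basis_empty n]

lemma conj_basis : ∀ n (α : Finset ℕ), α ⊆ Finset.Icc 1 n → α.Nonempty →
    CD.conj n (CD.basis n α) = -CD.basis n α
  | 0, α, hs, hne => by
    exfalso
    have h0 : Finset.Icc 1 0 = ∅ := Finset.Icc_eq_empty (by omega)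
    rw [h0, Finset.subset_empty] at hs
    rw [hs] at hne
    exact Finset.not_nonempty_empty hne
  | n+1, α, hs, hne => by
    by_cases hm : n + 1 ∈ α
    · show CD.conj (n+1) (if n + 1 ∈ α then ((0 : CD n), CD.basis n (α.erase (n+1)))
        else (CD.basis n α, 0)) = -(if n + 1 ∈ α then ((0 : CD n), CD.basis n (α.erase (n+1)))
        else (CD.basis n α, 0))
      rw [if_pos hm, show (if n + 1 ∈ α then ((0 : CD n), CD.basis n (α.erase (n+1))) else (CD.basis n α, 0) : CD (n+1)) = ((0 : CD n), CD.basis n (α.erase (n+1))) from if_pos hm]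
      show ((CD.conj n 0, -CD.basis n (α.erase (n+1))) : CD (n+1)) = _
      rw [conj_zero, neg_pair, neg_zero]
    · show CD.conj (n+1) (if n + 1 ∈ α then ((0 : CD n), CD.basis n (α.erase (n+1)))
        else (CD.basis n α, 0)) = -(if n + 1 ∈ α then ((0 : CD n), CD.basis n (α.erase (n+1)))
        else (CD.basis n α, 0))
      rw [if_neg hm, show (if n + 1 ∈ α then ((0 : CD n), CD.basis n (α.erase (n+1))) else (CD.basis n α, 0) : CD (n+1)) = (CD.basis n α, 0) from if_neg hm]
      show ((CD.conj n (CD.basis n α), -(0 : CD n)) : CD (n+1)) = _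
      have hs' : α ⊆ Finset.Icc 1 n := by
        intro i hi
        have h1 := hs hi
        rw [Finset.mem_Icc] at h1 ⊢
        have : i ≠ n + 1 := fun h => hm (h ▸ hi)
        omega
      rw [conj_basis n α hs' hne, neg_pair, neg_zero]

end CDaux

namespace CDaux

lemma basis_succ (n : ℕ) (α : Finset ℕ) :
    CD.basis (n+1) α = if n+1 ∈ α then ((0 : CD n), CD.basis n (α.erase (n+1)))
      else (CD.basis n α, 0) := rfl

lemma subset_step {n : ℕ} {α : Finset ℕ} (hs : α ⊆ Finset.Icc 1 (n+1)) (hm : n+1 ∉ α) :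
    α ⊆ Finset.Icc 1 n := by
  intro i hi
  have h1 := hs hi
  rw [Finset.mem_Icc] at h1 ⊢
  have : i ≠ n + 1 := fun h => hm (h ▸ hi)
  omega

lemma erase_subset_step {n : ℕ} {α : Finset ℕ} (hs : α ⊆ Finset.Icc 1 (n+1)) :
    α.erase (n+1) ⊆ Finset.Icc 1 n := by
  intro i hi
  have h1 := hs (Finset.mem_of_mem_erase hi)
  have h3 := Finset.ne_of_mem_erase hi
  rw [Finset.mem_Icc] at h1 ⊢
  omega

def Good (n : ℕ) : Prop :=
  ∀ α β : Finset ℕ, α ⊆ Finset.Icc 1 n → β ⊆ Finset.Icc 1 n →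
    (α.Nonempty →
      CD.mul1 n (CD.mul1 n (CD.basis n β) (CD.basis n α)) (CD.basis n α) = -CD.basis n β ∧
      CD.mul1 n (CD.basis n α) (CD.mul1 n (CD.basis n α) (CD.basis n β)) = -CD.basis n β) ∧
    CD.mul1 n (CD.mul1 n (CD.basis n α) (CD.basis n β)) (CD.basis n α) =
      CD.mul1 n (CD.basis n α) (CD.mul1 n (CD.basis n β) (CD.basis n α))

lemma good_zero : Good 0 := by
  intro α β hα hβ
  constructor
  · intro hne
    have h0 : Finset.Icc 1 0 = ∅ := Finset.Icc_eq_empty (by omega)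
    rw [h0, Finset.subset_empty] at hα
    rw [hα] at hne
    exact absurd hne Finset.not_nonempty_empty
  · exact mul_assoc (show ℝ from CD.basis 0 α) (show ℝ from CD.basis 0 β)
      (show ℝ from CD.basis 0 α)

section
variable {n : ℕ} {α β : Finset ℕ}

lemma gL3 (h : Good n) (hα : α ⊆ Finset.Icc 1 n) (hβ : β ⊆ Finset.Icc 1 n) (hne : α.Nonempty) :
    CD.mul1 n (CD.mul1 n (CD.basis n β) (CD.basis n α)) (CD.basis n α) = -CD.basis n β :=
  ((h α β hα hβ).1 hne).1

lemma gL4 (h : Good n) (hα : α ⊆ Finset.Icc 1 n) (hβ : β ⊆ Finset.Icc 1 n) (hne : α.Nonempty) :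
    CD.mul1 n (CD.basis n α) (CD.mul1 n (CD.basis n α) (CD.basis n β)) = -CD.basis n β :=
  ((h α β hα hβ).1 hne).2

lemma gL5 (h : Good n) (hα : α ⊆ Finset.Icc 1 n) (hβ : β ⊆ Finset.Icc 1 n) :
    CD.mul1 n (CD.mul1 n (CD.basis n α) (CD.basis n β)) (CD.basis n α) =
      CD.mul1 n (CD.basis n α) (CD.mul1 n (CD.basis n β) (CD.basis n α)) :=
  (h α β hα hβ).2

lemma gaux1 (h : Good n) (hα : α ⊆ Finset.Icc 1 n) (hβ : β ⊆ Finset.Icc 1 n) :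
    CD.mul1 n (CD.basis n α) (CD.mul1 n (CD.conj n (CD.basis n α)) (CD.basis n β)) =
      CD.basis n β := by
  rcases α.eq_empty_or_nonempty with rfl | hne
  · rw [basis_empty, conj_one, one_mul', one_mul']
  · rw [conj_basis n α hα hne, neg_mul', mul_neg', gL4 h hα hβ hne, neg_neg]

lemma gaux1' (h : Good n) (hα : α ⊆ Finset.Icc 1 n) (hβ : β ⊆ Finset.Icc 1 n) :
    CD.mul1 n (CD.conj n (CD.basis n α)) (CD.mul1 n (CD.basis n α) (CD.basis n β)) =
      CD.basis n β := by
  rcases α.eq_empty_or_nonempty with rfl | hne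
  · rw [basis_empty, conj_one, one_mul', one_mul']
  · rw [conj_basis n α hα hne, neg_mul', gL4 h hα hβ hne, neg_neg]

lemma gaux2 (h : Good n) (hα : α ⊆ Finset.Icc 1 n) (hβ : β ⊆ Finset.Icc 1 n) :
    CD.mul1 n (CD.mul1 n (CD.basis n β) (CD.conj n (CD.basis n α))) (CD.basis n α) =
      CD.basis n β := by
  rcases α.eq_empty_or_nonempty with rfl | hne
  · rw [basis_empty, conj_one, mul_one', mul_one']
  · rw [conj_basis n α hα hne, mul_neg', neg_mul', gL3 h hα hβ hne, neg_neg]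

lemma gaux3 (h : Good n) (hα : α ⊆ Finset.Icc 1 n) (hβ : β ⊆ Finset.Icc 1 n) :
    CD.mul1 n (CD.mul1 n (CD.basis n β) (CD.basis n α)) (CD.conj n (CD.basis n α)) =
      CD.mul1 n (CD.mul1 n (CD.basis n β) (CD.conj n (CD.basis n α))) (CD.basis n α) := by
  rcases α.eq_empty_or_nonempty with rfl | hne
  · rw [basis_empty, conj_one]
  · rw [conj_basis n α hα hne]
    simp only [mul_neg', neg_mul']

lemma gaux4 (h : Good n) (hα : α ⊆ Finset.Icc 1 n) (hβ : β ⊆ Finset.Icc 1 n) :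
    CD.mul1 n (CD.conj n (CD.basis n α)) (CD.mul1 n (CD.basis n α) (CD.conj n (CD.basis n β))) =
      CD.mul1 n (CD.mul1 n (CD.conj n (CD.basis n β)) (CD.conj n (CD.basis n α)))
        (CD.basis n α) := by
  rcases β.eq_empty_or_nonempty with rfl | hneβ
  · rw [basis_empty, conj_one, mul_one', one_mul']
  · rw [conj_basis n β hβ hneβ]
    simp only [mul_neg', neg_mul']
    rw [gaux1' h hα hβ, gaux2 h hα hβ]

end

lemma good_succ (n : ℕ) (h : Good n) : Good (n+1) := by
  intro α β hα hβ
  by_cases hαm : n + 1 ∈ α <;> by_cases hβm : n + 1 ∈ β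
  -- case α ∋, β ∋
  · have hA := erase_subset_step hα
    have hB := erase_subset_step hβ
    rw [basis_succ, basis_succ, if_pos hαm, if_pos hβm]
    refine ⟨fun hne => ⟨?_, ?_⟩, ?_⟩
    · simp only [mul1_succ, conj_zero, mul_zero', zero_mul', mul_neg', neg_mul', conj_neg,
        conj_mul n, conj_conj, neg_neg, sub_zero, zero_sub, add_zero, zero_add, neg_pair, neg_pair', neg_zero]
      exact pair_eq rfl (by rw [gaux1 h hA hB])
    · simp only [mul1_succ, conj_zero, mul_zero', zero_mul', mul_neg', neg_mul', conj_neg,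
        conj_mul n, conj_conj, neg_neg, sub_zero, zero_sub, add_zero, zero_add, neg_pair, neg_pair', neg_zero]
      exact pair_eq rfl (by rw [gaux1 h hA hB])
    · simp only [mul1_succ, conj_zero, mul_zero', zero_mul', mul_neg', neg_mul', conj_neg,
        conj_mul n, conj_conj, neg_neg, sub_zero, zero_sub, add_zero, zero_add, neg_pair, neg_pair', neg_zero]
      rfl
  -- case α ∋, β ∌
  · have hA := erase_subset_step hα
    have hB := subset_step hβ hβm
    rw [basis_succ, basis_succ, if_pos hαm, if_neg hβm]
    refine ⟨fun hne => ⟨?_, ?_⟩, ?_⟩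
    · simp only [mul1_succ, conj_zero, mul_zero', zero_mul', mul_neg', neg_mul', conj_neg,
        conj_mul n, conj_conj, neg_neg, sub_zero, zero_sub, add_zero, zero_add, neg_pair, neg_pair', neg_zero]
      exact pair_eq (by rw [gaux1' h hA hB]) rfl
    · simp only [mul1_succ, conj_zero, mul_zero', zero_mul', mul_neg', neg_mul', conj_neg,
        conj_mul n, conj_conj, neg_neg, sub_zero, zero_sub, add_zero, zero_add, neg_pair, neg_pair', neg_zero]
      exact pair_eq (by rw [gaux2 h hA hB]) rfl
    · simp only [mul1_succ, conj_zero, mul_zero', zero_mul', mul_neg', neg_mul', conj_neg,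
        conj_mul n, conj_conj, neg_neg, sub_zero, zero_sub, add_zero, zero_add, neg_pair, neg_pair', neg_zero]
      exact pair_eq (by rw [gaux4 h hA hB]) rfl
  -- case α ∌, β ∋
  · have hA := subset_step hα hαm
    have hB := erase_subset_step hβ
    rw [basis_succ, basis_succ, if_neg hαm, if_pos hβm]
    refine ⟨fun hne => ⟨?_, ?_⟩, ?_⟩
    · simp only [mul1_succ, conj_zero, mul_zero', zero_mul', mul_neg', neg_mul', conj_neg,
        conj_mul n, conj_conj, neg_neg, sub_zero, zero_sub, add_zero, zero_add, neg_pair, neg_pair', neg_zero]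
      refine pair_eq rfl ?_
      rw [conj_basis n α hA hne]
      simp only [mul_neg', neg_mul', neg_neg]
      exact gL3 h hA hB hne
    · simp only [mul1_succ, conj_zero, mul_zero', zero_mul', mul_neg', neg_mul', conj_neg,
        conj_mul n, conj_conj, neg_neg, sub_zero, zero_sub, add_zero, zero_add, neg_pair, neg_pair', neg_zero]
      exact pair_eq rfl (gL3 h hA hB hne)
    · simp only [mul1_succ, conj_zero, mul_zero', zero_mul', mul_neg', neg_mul', conj_neg,
        conj_mul n, conj_conj, neg_neg, sub_zero, zero_sub, add_zero, zero_add, neg_pair, neg_pair', neg_zero]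
      exact pair_eq rfl (gaux3 h hA hB)
  -- case α ∌, β ∌
  · have hA := subset_step hα hαm
    have hB := subset_step hβ hβm
    rw [basis_succ, basis_succ, if_neg hαm, if_neg hβm]
    refine ⟨fun hne => ⟨?_, ?_⟩, ?_⟩
    · simp only [mul1_succ, conj_zero, mul_zero', zero_mul', mul_neg', neg_mul', conj_neg,
        conj_mul n, conj_conj, neg_neg, sub_zero, zero_sub, add_zero, zero_add, neg_pair, neg_pair', neg_zero]
      exact pair_eq (gL3 h hA hB hne) rfl
    · simp only [mul1_succ, conj_zero, mul_zero', zero_mul', mul_neg', neg_mul', conj_neg,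
        conj_mul n, conj_conj, neg_neg, sub_zero, zero_sub, add_zero, zero_add, neg_pair, neg_pair', neg_zero]
      exact pair_eq (gL4 h hA hB hne) rfl
    · simp only [mul1_succ, conj_zero, mul_zero', zero_mul', mul_neg', neg_mul', conj_neg,
        conj_mul n, conj_conj, neg_neg, sub_zero, zero_sub, add_zero, zero_add, neg_pair, neg_pair', neg_zero]
      exact pair_eq (gL5 h hA hB) rfl

lemma good_all : ∀ n, Good n
  | 0 => good_zero
  | n + 1 => good_succ n (good_all n)

end CDaux

/-- With all `εᵢ = 1`, for distinct pure basis elements `x, y`: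
`(y·x)·x = −y`, `x·(x·y) = −y`, and `(x·y)·x = x·(y·x)`. -/
theorem stmt4 (n : ℕ) (α β : Finset ℕ) (hα : CD.IsPure n α) (hβ : CD.IsPure n β)
    (hne : α ≠ β) (x y : CD n) (hx : x = CD.basis n α) (hy : y = CD.basis n β) :
    CD.mul1 n (CD.mul1 n y x) x = -y ∧
    CD.mul1 n x (CD.mul1 n x y) = -y ∧
    CD.mul1 n (CD.mul1 n x y) x = CD.mul1 n x (CD.mul1 n y x) := by
  subst hx; subst hy
  obtain ⟨hnea, hsub⟩ := hα
  obtain ⟨_, hsubβ⟩ := hβ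
  exact ⟨((CDaux.good_all n α β hsub hsubβ).1 hnea).1,
    ((CDaux.good_all n α β hsub hsubβ).1 hnea).2,
    (CDaux.good_all n α β hsub hsubβ).2⟩
end
end

section
/- With all signs εᵢ = 1 and n ≥ 2, for any two distinct pure basis elements b, c of the real Cayley–Dickson algebra 𝔸ₙ, the 4-dimensional ℝ-subspace spanned by {1, b, c, b·c} is closed under multiplication, and there is an ℝ-linear bijection from this subspace onto the quaternions ℍ that sends 1 to 1 and preserves multiplication; in particular the subalgebra generated by b and c is associative. -/
noncomputable section

namespace CD

theorem pext {n : ℕ} {x y : CD (n+1)} (h1 : x.1 = y.1) (h2 : x.2 = y.2) : x = y :=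
  Prod.ext h1 h2

theorem mul1_succ (n : ℕ) (x y : CD (n+1)) :
    mul1 (n+1) x y = (mul1 n x.1 y.1 - mul1 n (conj n y.2) x.2,
      mul1 n y.2 x.1 + mul1 n x.2 (conj n y.1)) := by
  show mul _ (n+1) x y = _
  rw [mul]
  simp
  rfl

theorem mul1_zero (x y : ℝ) : mul1 0 x y = x * y := rfl

theorem conj_succ (n : ℕ) (x : CD (n+1)) : conj (n+1) x = (conj n x.1, -x.2) := rfl

theorem one_succ (n : ℕ) : one (n+1) = (one n, 0) := rfl

theorem conj_pp (n : ℕ) (x : CD n × CD n) : conj (n+1) x = (conj n x.1, -x.2) := rfl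

theorem mul1_pl (n : ℕ) (x : CD n × CD n) (y : CD (n+1)) :
    mul1 (n+1) x y = (mul1 n x.1 y.1 - mul1 n (conj n y.2) x.2,
      mul1 n y.2 x.1 + mul1 n x.2 (conj n y.1)) := mul1_succ n x y

theorem mul1_pr (n : ℕ) (x : CD (n+1)) (y : CD n × CD n) :
    mul1 (n+1) x y = (mul1 n x.1 y.1 - mul1 n (conj n y.2) x.2,
      mul1 n y.2 x.1 + mul1 n x.2 (conj n y.1)) := mul1_succ n x y

theorem mul1_pp (n : ℕ) (x y : CD n × CD n) :
    mul1 (n+1) x y = (mul1 n x.1 y.1 - mul1 n (conj n y.2) x.2,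
      mul1 n y.2 x.1 + mul1 n x.2 (conj n y.1)) := mul1_succ n x y

theorem conj_add : ∀ n, ∀ x y : CD n, conj n (x + y) = conj n x + conj n y := by
  intro n
  induction n with
  | zero => intro x y; rfl
  | succ n ih =>
    intro x y
    exact pext (ih x.1 y.1) (neg_add _ _)

theorem conj_smul : ∀ n, ∀ (r : ℝ), ∀ x : CD n, conj n (r • x) = r • conj n x := by
  intro n
  induction n with
  | zero => intro r x; rfl
  | succ n ih =>
    intro r x
    exact pext (ih r x.1) (smul_neg r x.2).symm

theorem conj_zero (n : ℕ) : conj n (0 : CD n) = 0 := by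
  have := conj_smul n 0 0
  simpa using this

theorem conj_neg (n : ℕ) (x : CD n) : conj n (-x) = -conj n x := by
  have := conj_smul n (-1) x
  simpa using this

theorem conj_conj : ∀ n, ∀ x : CD n, conj n (conj n x) = x := by
  intro n
  induction n with
  | zero => intro x; rfl
  | succ n ih =>
    intro x
    exact pext (ih x.1) (neg_neg x.2)

theorem conj_one : ∀ n, conj n (one n) = one n := by
  intro n
  induction n with
  | zero => rfl
  | succ n ih => exact pext ih (neg_zero)

end CD
namespace CD

theorem mul1_add : ∀ n, ∀ x y z : CD n,
    mul1 n (x + y) z = mul1 n x z + mul1 n y z ∧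
    mul1 n z (x + y) = mul1 n z x + mul1 n z y := by
  intro n
  induction n with
  | zero =>
    intro x y z
    exact ⟨add_mul (show ℝ from x) (show ℝ from y) (show ℝ from z),
      mul_add (show ℝ from z) (show ℝ from x) (show ℝ from y)⟩
  | succ n ih =>
    intro x y z
    constructor
    · rw [mul1_succ, mul1_succ, mul1_succ]
      refine pext ?_ ?_ <;> simp only []
      · show mul1 n ((x+y).1) z.1 - mul1 n (conj n z.2) ((x+y).2) = _
        rw [show (x+y).1 = x.1 + y.1 from rfl, show (x+y).2 = x.2 + y.2 from rfl,
          (ih x.1 y.1 z.1).1, (ih x.2 y.2 (conj n z.2)).2]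
        show _ = (mul1 n x.1 z.1 - mul1 n (conj n z.2) x.2) + (mul1 n y.1 z.1 - mul1 n (conj n z.2) y.2)
        abel
      · show mul1 n z.2 ((x+y).1) + mul1 n ((x+y).2) (conj n z.1) = _
        rw [show (x+y).1 = x.1 + y.1 from rfl, show (x+y).2 = x.2 + y.2 from rfl,
          (ih x.1 y.1 z.2).2, (ih x.2 y.2 (conj n z.1)).1]
        show _ = (mul1 n z.2 x.1 + mul1 n x.2 (conj n z.1)) + (mul1 n z.2 y.1 + mul1 n y.2 (conj n z.1))
        abel
    · rw [mul1_succ, mul1_succ, mul1_succ]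
      refine pext ?_ ?_ <;> simp only []
      · show mul1 n z.1 ((x+y).1) - mul1 n (conj n ((x+y).2)) z.2 = _
        rw [show (x+y).1 = x.1 + y.1 from rfl, show (x+y).2 = x.2 + y.2 from rfl,
          conj_add, (ih x.1 y.1 z.1).2, (ih (conj n x.2) (conj n y.2) z.2).1]
        show _ = (mul1 n z.1 x.1 - mul1 n (conj n x.2) z.2) + (mul1 n z.1 y.1 - mul1 n (conj n y.2) z.2)
        abel
      · show mul1 n ((x+y).2) z.1 + mul1 n z.2 (conj n ((x+y).1)) = _
        rw [show (x+y).1 = x.1 + y.1 from rfl, show (x+y).2 = x.2 + y.2 from rfl,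
          conj_add, (ih x.2 y.2 z.1).1, (ih (conj n x.1) (conj n y.1) z.2).2]
        show _ = (mul1 n x.2 z.1 + mul1 n z.2 (conj n x.1)) + (mul1 n y.2 z.1 + mul1 n z.2 (conj n y.1))
        abel

theorem mul1_smul : ∀ n, ∀ (r : ℝ), ∀ x z : CD n,
    mul1 n (r • x) z = r • mul1 n x z ∧
    mul1 n z (r • x) = r • mul1 n z x := by
  intro n
  induction n with
  | zero =>
    intro r x z
    refine ⟨?_, ?_⟩
    · show (r * (show ℝ from x)) * (show ℝ from z) = r * ((show ℝ from x) * (show ℝ from z)); ring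
    · show (show ℝ from z) * (r * (show ℝ from x)) = r * ((show ℝ from z) * (show ℝ from x)); ring
  | succ n ih =>
    intro r x z
    constructor
    · rw [mul1_succ, mul1_succ]
      refine pext ?_ ?_ <;> simp only []
      · show mul1 n ((r • x).1) z.1 - mul1 n (conj n z.2) ((r • x).2) = _
        rw [show (r • x).1 = r • x.1 from rfl, show (r • x).2 = r • x.2 from rfl,
          (ih r x.1 z.1).1, (ih r x.2 (conj n z.2)).2]
        show _ = r • (mul1 n x.1 z.1 - mul1 n (conj n z.2) x.2)
        rw [smul_sub]
      · show mul1 n z.2 ((r • x).1) + mul1 n ((r • x).2) (conj n z.1) = _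
        rw [show (r • x).1 = r • x.1 from rfl, show (r • x).2 = r • x.2 from rfl,
          (ih r x.1 z.2).2, (ih r x.2 (conj n z.1)).1]
        show _ = r • (mul1 n z.2 x.1 + mul1 n x.2 (conj n z.1))
        rw [smul_add]
    · rw [mul1_succ, mul1_succ]
      refine pext ?_ ?_ <;> simp only []
      · show mul1 n z.1 ((r • x).1) - mul1 n (conj n ((r • x).2)) z.2 = _
        rw [show (r • x).1 = r • x.1 from rfl, show (r • x).2 = r • x.2 from rfl,
          conj_smul, (ih r x.1 z.1).2, (ih r (conj n x.2) z.2).1]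
        show _ = r • (mul1 n z.1 x.1 - mul1 n (conj n x.2) z.2)
        rw [smul_sub]
      · show mul1 n ((r • x).2) z.1 + mul1 n z.2 (conj n ((r • x).1)) = _
        rw [show (r • x).1 = r • x.1 from rfl, show (r • x).2 = r • x.2 from rfl,
          conj_smul, (ih r x.2 z.1).1, (ih r (conj n x.1) z.2).2]
        show _ = r • (mul1 n x.2 z.1 + mul1 n z.2 (conj n x.1))
        rw [smul_add]

theorem mul1_add_left (n : ℕ) (x y z : CD n) :
    mul1 n (x + y) z = mul1 n x z + mul1 n y z := (mul1_add n x y z).1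
theorem mul1_add_right (n : ℕ) (x y z : CD n) :
    mul1 n z (x + y) = mul1 n z x + mul1 n z y := (mul1_add n x y z).2
theorem mul1_smul_left (n : ℕ) (r : ℝ) (x z : CD n) :
    mul1 n (r • x) z = r • mul1 n x z := (mul1_smul n r x z).1
theorem mul1_smul_right (n : ℕ) (r : ℝ) (x z : CD n) :
    mul1 n z (r • x) = r • mul1 n z x := (mul1_smul n r x z).2

theorem mul1_zero_left (n : ℕ) (z : CD n) : mul1 n 0 z = 0 := by
  have := mul1_smul_left n 0 0 z; simpa using this
theorem mul1_zero_right (n : ℕ) (z : CD n) : mul1 n z 0 = 0 := by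
  have := mul1_smul_right n 0 0 z; simpa using this
theorem mul1_neg_left (n : ℕ) (x z : CD n) : mul1 n (-x) z = -mul1 n x z := by
  have := mul1_smul_left n (-1) x z; simpa using this
theorem mul1_neg_right (n : ℕ) (x z : CD n) : mul1 n z (-x) = -mul1 n z x := by
  have := mul1_smul_right n (-1) x z; simpa using this

end CD
namespace CD

theorem one_mul1 : ∀ n, ∀ x : CD n, mul1 n (one n) x = x ∧ mul1 n x (one n) = x := by
  intro n
  induction n with
  | zero =>
    intro x
    exact ⟨one_mul (show ℝ from x), mul_one (show ℝ from x)⟩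
  | succ n ih =>
    intro x
    constructor
    · rw [mul1_succ, one_succ]
      refine pext ?_ ?_ <;> simp only []
      · show mul1 n (one n) x.1 - mul1 n (conj n x.2) 0 = x.1
        rw [(ih x.1).1, mul1_zero_right, sub_zero]
      · show mul1 n x.2 (one n) + mul1 n 0 (conj n x.1) = x.2
        rw [(ih x.2).2, mul1_zero_left, add_zero]
    · rw [mul1_succ, one_succ]
      refine pext ?_ ?_ <;> simp only []
      · show mul1 n x.1 (one n) - mul1 n (conj n 0) x.2 = x.1
        rw [(ih x.1).2, conj_zero, mul1_zero_left, sub_zero]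
      · show mul1 n 0 x.1 + mul1 n x.2 (conj n (one n)) = x.2
        rw [mul1_zero_left, conj_one, (ih x.2).2, zero_add]

theorem one_mul1' (n : ℕ) (x : CD n) : mul1 n (one n) x = x := (one_mul1 n x).1
theorem mul1_one' (n : ℕ) (x : CD n) : mul1 n x (one n) = x := (one_mul1 n x).2

theorem conj_mul1 : ∀ n, ∀ x y : CD n,
    conj n (mul1 n x y) = mul1 n (conj n y) (conj n x) := by
  intro n
  induction n with
  | zero => intro x y; exact mul_comm (show ℝ from x) (show ℝ from y)
  | succ n ih =>
    intro x y
    rw [mul1_succ, conj_pp, conj_succ, conj_succ, mul1_pp]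
    refine pext ?_ ?_ <;> simp only []
    · show conj n (mul1 n x.1 y.1 - mul1 n (conj n y.2) x.2) =
        mul1 n (conj n y.1) (conj n x.1) - mul1 n (conj n (-x.2)) (-y.2)
    -- conj(a - b) = conj a - conj b
      have hsub : ∀ a b : CD n, conj n (a - b) = conj n a - conj n b := by
        intro a b
        rw [sub_eq_add_neg, conj_add, conj_neg, sub_eq_add_neg]
      rw [hsub, ih, ih, conj_conj, conj_neg, mul1_neg_left, mul1_neg_right, neg_neg]
    · show -(mul1 n y.2 x.1 + mul1 n x.2 (conj n y.1)) =
        mul1 n (-x.2) (conj n y.1) + mul1 n (-y.2) (conj n (conj n x.1))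
      rw [conj_conj, mul1_neg_left, mul1_neg_left, neg_add]
      abel

end CD
namespace CD

theorem basis_succ_mem (n : ℕ) (α : Finset ℕ) (h : n + 1 ∈ α) :
    basis (n+1) α = ((0 : CD n), basis n (α.erase (n+1))) := by
  rw [basis]; exact if_pos h

theorem basis_succ_not_mem (n : ℕ) (α : Finset ℕ) (h : n + 1 ∉ α) :
    basis (n+1) α = (basis n α, (0 : CD n)) := by
  rw [basis]; exact if_neg h

theorem basis_empty : ∀ n, basis n (∅ : Finset ℕ) = one n := by
  intro n
  induction n with
  | zero => rfl
  | succ n ih =>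
    rw [basis_succ_not_mem n ∅ (by simp), ih, one_succ]

theorem conj_basis_pure : ∀ n, ∀ α : Finset ℕ, α.Nonempty → α ⊆ Finset.Icc 1 n →
    conj n (basis n α) = -(basis n α) := by
  intro n
  induction n with
  | zero =>
    intro α hne hsub
    simp at hsub
    exact absurd hsub hne.ne_empty
  | succ n ih =>
    intro α hne hsub
    by_cases h : n + 1 ∈ α
    · rw [basis_succ_mem n α h, conj_pp]
      refine pext ?_ rfl
      show conj n 0 = -(0 : CD n)
      rw [conj_zero, neg_zero]
    · have hsub' : α ⊆ Finset.Icc 1 n := by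
        intro a ha
        have := hsub ha
        simp only [Finset.mem_Icc] at this ⊢
        refine ⟨this.1, ?_⟩
        rcases Nat.lt_or_ge a (n+1) with h' | h'
        · omega
        · exfalso; have : a = n + 1 := by omega
          exact h (this ▸ ha)
      rw [basis_succ_not_mem n α h, conj_pp]
      refine pext ?_ ?_ <;> simp only []
      · rw [ih α hne hsub']
        rfl
      · show -(0 : CD n) = -(0 : CD n); rfl

theorem conj_basis_sign (n : ℕ) (α : Finset ℕ) (hsub : α ⊆ Finset.Icc 1 n) :
    ∃ t : ℝ, (t = 1 ∨ t = -1) ∧ conj n (basis n α) = t • basis n α := by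
  rcases Finset.eq_empty_or_nonempty α with rfl | hne
  · exact ⟨1, Or.inl rfl, by rw [basis_empty, conj_one, one_smul]⟩
  · exact ⟨-1, Or.inr rfl, by rw [conj_basis_pure n α hne hsub, neg_smul, one_smul]⟩

end CD
namespace CD

theorem key : ∀ n, ∀ α : Finset ℕ, α ⊆ Finset.Icc 1 n → ∀ y : CD n,
    mul1 n (conj n (basis n α)) (mul1 n (basis n α) y) = y ∧
    mul1 n (basis n α) (mul1 n (conj n (basis n α)) y) = y ∧
    mul1 n (mul1 n y (basis n α)) (conj n (basis n α)) = y ∧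
    mul1 n (mul1 n y (conj n (basis n α))) (basis n α) = y := by
  intro n
  induction n with
  | zero =>
    intro α _ y
    refine ⟨?_, ?_, ?_, ?_⟩
    · show (1:ℝ) * ((1:ℝ) * (show ℝ from y)) = (show ℝ from y); ring
    · show (1:ℝ) * ((1:ℝ) * (show ℝ from y)) = (show ℝ from y); ring
    · show ((show ℝ from y) * (1:ℝ)) * (1:ℝ) = (show ℝ from y); ring
    · show ((show ℝ from y) * (1:ℝ)) * (1:ℝ) = (show ℝ from y); ring
  | succ n ih =>
    intro α hsub y
    by_cases h : n + 1 ∈ α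
    · have hb := basis_succ_mem n α h
      have hsub' : α.erase (n+1) ⊆ Finset.Icc 1 n := by
        intro a ha
        have h1 := Finset.mem_of_mem_erase ha
        have h2 := Finset.ne_of_mem_erase ha
        have := hsub h1
        simp only [Finset.mem_Icc] at this ⊢
        omega
      have ih1 : ∀ z, mul1 n (conj n (basis n (α.erase (n+1))))
          (mul1 n (basis n (α.erase (n+1))) z) = z := fun z => (ih _ hsub' z).1
      have ih2 : ∀ z, mul1 n (basis n (α.erase (n+1)))
          (mul1 n (conj n (basis n (α.erase (n+1)))) z) = z := fun z => (ih _ hsub' z).2.1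
      have ih3 : ∀ z, mul1 n (mul1 n z (basis n (α.erase (n+1))))
          (conj n (basis n (α.erase (n+1)))) = z := fun z => (ih _ hsub' z).2.2.1
      have ih4 : ∀ z, mul1 n (mul1 n z (conj n (basis n (α.erase (n+1)))))
          (basis n (α.erase (n+1))) = z := fun z => (ih _ hsub' z).2.2.2
      refine ⟨?_, ?_, ?_, ?_⟩ <;>
        · rw [hb]
          refine pext ?_ ?_ <;>
            simp [mul1_succ, conj_succ, conj_pp, mul1_pl, mul1_pr, mul1_pp, conj_zero, conj_conj, conj_neg, conj_mul1,
              mul1_zero_left, mul1_zero_right, mul1_neg_left, mul1_neg_right,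
              ih1, ih2, ih3, ih4]
    · have hb := basis_succ_not_mem n α h
      have hsub' : α ⊆ Finset.Icc 1 n := by
        intro a ha
        have := hsub ha
        simp only [Finset.mem_Icc] at this ⊢
        have : a ≠ n + 1 := fun hh => h (hh ▸ ha)
        omega
      have ih1 : ∀ z, mul1 n (conj n (basis n α))
          (mul1 n (basis n α) z) = z := fun z => (ih _ hsub' z).1
      have ih2 : ∀ z, mul1 n (basis n α)
          (mul1 n (conj n (basis n α)) z) = z := fun z => (ih _ hsub' z).2.1
      have ih3 : ∀ z, mul1 n (mul1 n z (basis n α))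
          (conj n (basis n α)) = z := fun z => (ih _ hsub' z).2.2.1
      have ih4 : ∀ z, mul1 n (mul1 n z (conj n (basis n α)))
          (basis n α) = z := fun z => (ih _ hsub' z).2.2.2
      refine ⟨?_, ?_, ?_, ?_⟩ <;>
        · rw [hb]
          refine pext ?_ ?_ <;>
            simp [mul1_succ, conj_succ, conj_pp, mul1_pl, mul1_pr, mul1_pp, conj_zero, conj_conj, conj_neg, conj_mul1,
              mul1_zero_left, mul1_zero_right, mul1_neg_left, mul1_neg_right,
              ih1, ih2, ih3, ih4]

end CD
namespace CD
open symmDiff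

theorem basis_sq (n : ℕ) (α : Finset ℕ) (hne : α.Nonempty) (hsub : α ⊆ Finset.Icc 1 n) :
    mul1 n (basis n α) (basis n α) = -(one n) := by
  have h1 := (key n α hsub (one n)).1
  rw [conj_basis_pure n α hne hsub, mul1_one', mul1_neg_left] at h1
  exact neg_eq_iff_eq_neg.mp h1

theorem mul1_basis_mul1 (n : ℕ) (α : Finset ℕ) (hne : α.Nonempty)
    (hsub : α ⊆ Finset.Icc 1 n) (y : CD n) :
    mul1 n (basis n α) (mul1 n (basis n α) y) = -y := by
  have h1 := (key n α hsub y).1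
  rw [conj_basis_pure n α hne hsub, mul1_neg_left] at h1
  exact neg_eq_iff_eq_neg.mp h1

theorem mul1_mul1_basis (n : ℕ) (α : Finset ℕ) (hne : α.Nonempty)
    (hsub : α ⊆ Finset.Icc 1 n) (y : CD n) :
    mul1 n (mul1 n y (basis n α)) (basis n α) = -y := by
  have h1 := (key n α hsub y).2.2.1
  rw [conj_basis_pure n α hne hsub, mul1_neg_right] at h1
  exact neg_eq_iff_eq_neg.mp h1

theorem basis_mul_basis : ∀ n, ∀ α β : Finset ℕ, α ⊆ Finset.Icc 1 n →
    β ⊆ Finset.Icc 1 n →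
    ∃ s : ℝ, (s = 1 ∨ s = -1) ∧
      mul1 n (basis n α) (basis n β) = s • basis n (α ∆ β) := by
  intro n
  induction n with
  | zero =>
    intro α β hα hβ
    simp at hα hβ
    subst hα; subst hβ
    refine ⟨1, Or.inl rfl, ?_⟩
    show (1:ℝ) * 1 = (1:ℝ) • _
    simp [basis]
  | succ n ih =>
    intro α β hα hβ
    have hα' : ∀ a ∈ α, a ≤ n + 1 ∧ 1 ≤ a := by
      intro a ha; have := hα ha; simp only [Finset.mem_Icc] at this; omega
    have hβ' : ∀ a ∈ β, a ≤ n + 1 ∧ 1 ≤ a := by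
      intro a ha; have := hβ ha; simp only [Finset.mem_Icc] at this; omega
    by_cases hA : n + 1 ∈ α <;> by_cases hB : n + 1 ∈ β
    · -- both contain n+1
      have hAe : α.erase (n+1) ⊆ Finset.Icc 1 n := by
        intro a ha
        have h1 := Finset.mem_of_mem_erase ha
        have h2 := Finset.ne_of_mem_erase ha
        have := hα' a h1; simp only [Finset.mem_Icc]; omega
      have hBe : β.erase (n+1) ⊆ Finset.Icc 1 n := by
        intro a ha
        have h1 := Finset.mem_of_mem_erase ha
        have h2 := Finset.ne_of_mem_erase ha
        have := hβ' a h1; simp only [Finset.mem_Icc]; omega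
      obtain ⟨t, ht, hconj⟩ := conj_basis_sign n (β.erase (n+1)) hBe
      obtain ⟨s, hs, hmul⟩ := ih (β.erase (n+1)) (α.erase (n+1)) hBe hAe
      refine ⟨-(t*s), by rcases ht with h|h <;> rcases hs with h'|h' <;>
        simp [h, h'], ?_⟩
      rw [basis_succ_mem n α hA, basis_succ_mem n β hB, mul1_pp]
      have hsd : ¬ (n+1 ∈ α ∆ β) := by
        simp [Finset.mem_symmDiff, hA, hB]
      rw [basis_succ_not_mem n _ hsd]
      have hset : (β.erase (n+1)) ∆ (α.erase (n+1)) = α ∆ β := by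
        ext a
        simp only [Finset.mem_symmDiff, Finset.mem_erase]
        by_cases ha : a = n + 1 <;> simp [ha, hA, hB] <;> tauto
      refine pext ?_ ?_ <;> simp only []
      · show mul1 n 0 0 - mul1 n (conj n (basis n (β.erase (n+1)))) (basis n (α.erase (n+1)))
          = (-(t*s) • ((basis n (α ∆ β), 0) : CD (n+1))).1
        rw [mul1_zero_left, hconj, mul1_smul_left, hmul, hset]
        show (0 : CD n) - t • s • basis n (α ∆ β) = -(t*s) • basis n (α ∆ β)
        rw [zero_sub, smul_smul, neg_smul]
      · show mul1 n (basis n (β.erase (n+1))) 0 + mul1 n (basis n (α.erase (n+1))) (conj n 0)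
          = (-(t*s) • ((basis n (α ∆ β), 0) : CD (n+1))).2
        rw [mul1_zero_right, conj_zero, mul1_zero_right, add_zero]
        show (0 : CD n) = -(t*s) • (0 : CD n)
        rw [smul_zero]
    · -- n+1 ∈ α only
      have hAe : α.erase (n+1) ⊆ Finset.Icc 1 n := by
        intro a ha
        have h1 := Finset.mem_of_mem_erase ha
        have h2 := Finset.ne_of_mem_erase ha
        have := hα' a h1; simp only [Finset.mem_Icc]; omega
      have hBs : β ⊆ Finset.Icc 1 n := by
        intro a ha
        have := hβ' a ha
        have : a ≠ n + 1 := fun hh => hB (hh ▸ ha)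
        simp only [Finset.mem_Icc]
        have := hβ' a ha; omega
      obtain ⟨t, ht, hconj⟩ := conj_basis_sign n β hBs
      obtain ⟨s, hs, hmul⟩ := ih (α.erase (n+1)) β hAe hBs
      refine ⟨t*s, by rcases ht with h|h <;> rcases hs with h'|h' <;>
        simp [h, h'], ?_⟩
      rw [basis_succ_mem n α hA, basis_succ_not_mem n β hB, mul1_pp]
      have hsd : n+1 ∈ α ∆ β := by
        simp [Finset.mem_symmDiff, hA, hB]
      rw [basis_succ_mem n _ hsd]
      have hset : (α.erase (n+1)) ∆ β = (α ∆ β).erase (n+1) := by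
        ext a
        simp only [Finset.mem_symmDiff, Finset.mem_erase]
        by_cases ha : a = n + 1
        · subst ha; simp [hA, hB]
        · simp [ha]
      refine pext ?_ ?_ <;> simp only []
      · show mul1 n 0 (basis n β) - mul1 n (conj n 0) (basis n (α.erase (n+1)))
          = ((t*s) • ((0, basis n ((α ∆ β).erase (n+1))) : CD (n+1))).1
        rw [mul1_zero_left, conj_zero, mul1_zero_left, sub_zero]
        show (0 : CD n) = (t*s) • (0 : CD n)
        rw [smul_zero]
      · show mul1 n 0 0 + mul1 n (basis n (α.erase (n+1))) (conj n (basis n β))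
          = ((t*s) • ((0, basis n ((α ∆ β).erase (n+1))) : CD (n+1))).2
        rw [mul1_zero_left, zero_add, hconj, mul1_smul_right, hmul, hset]
        show t • s • basis n ((α ∆ β).erase (n+1)) = (t*s) • basis n ((α ∆ β).erase (n+1))
        rw [smul_smul]
    · -- n+1 ∈ β only
      have hBe : β.erase (n+1) ⊆ Finset.Icc 1 n := by
        intro a ha
        have h1 := Finset.mem_of_mem_erase ha
        have h2 := Finset.ne_of_mem_erase ha
        have := hβ' a h1; simp only [Finset.mem_Icc]; omega
      have hAs : α ⊆ Finset.Icc 1 n := by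
        intro a ha
        have := hα' a ha
        have : a ≠ n + 1 := fun hh => hA (hh ▸ ha)
        simp only [Finset.mem_Icc]
        have := hα' a ha; omega
      obtain ⟨s, hs, hmul⟩ := ih (β.erase (n+1)) α hBe hAs
      refine ⟨s, hs, ?_⟩
      rw [basis_succ_not_mem n α hA, basis_succ_mem n β hB, mul1_pp]
      have hsd : n+1 ∈ α ∆ β := by
        simp [Finset.mem_symmDiff, hA, hB]
      rw [basis_succ_mem n _ hsd]
      have hset : (β.erase (n+1)) ∆ α = (α ∆ β).erase (n+1) := by
        ext a
        simp only [Finset.mem_symmDiff, Finset.mem_erase]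
        by_cases ha : a = n + 1
        · subst ha; simp [hA, hB]
        · simp [ha]; tauto
      refine pext ?_ ?_ <;> simp only []
      · show mul1 n (basis n α) 0 - mul1 n (conj n (basis n (β.erase (n+1)))) 0
          = (s • ((0, basis n ((α ∆ β).erase (n+1))) : CD (n+1))).1
        rw [mul1_zero_right, mul1_zero_right, sub_zero]
        show (0 : CD n) = s • (0 : CD n)
        rw [smul_zero]
      · show mul1 n (basis n (β.erase (n+1))) (basis n α) + mul1 n 0 (conj n 0)
          = (s • ((0, basis n ((α ∆ β).erase (n+1))) : CD (n+1))).2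
        rw [mul1_zero_left, add_zero, hmul, hset]
        rfl
    · -- n+1 in neither
      have hAs : α ⊆ Finset.Icc 1 n := by
        intro a ha
        have := hα' a ha
        have : a ≠ n + 1 := fun hh => hA (hh ▸ ha)
        simp only [Finset.mem_Icc]
        have := hα' a ha; omega
      have hBs : β ⊆ Finset.Icc 1 n := by
        intro a ha
        have := hβ' a ha
        have : a ≠ n + 1 := fun hh => hB (hh ▸ ha)
        simp only [Finset.mem_Icc]
        have := hβ' a ha; omega
      obtain ⟨s, hs, hmul⟩ := ih α β hAs hBs
      refine ⟨s, hs, ?_⟩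
      rw [basis_succ_not_mem n α hA, basis_succ_not_mem n β hB, mul1_pp]
      have hsd : ¬ (n+1 ∈ α ∆ β) := by
        simp [Finset.mem_symmDiff, hA, hB]
      rw [basis_succ_not_mem n _ hsd]
      refine pext ?_ ?_ <;> simp only []
      · show mul1 n (basis n α) (basis n β) - mul1 n (conj n 0) 0
          = (s • ((basis n (α ∆ β), 0) : CD (n+1))).1
        rw [conj_zero, mul1_zero_left, sub_zero, hmul]
        rfl
      · show mul1 n 0 (basis n α) + mul1 n 0 (conj n (basis n β))
          = (s • ((basis n (α ∆ β), 0) : CD (n+1))).2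
        rw [mul1_zero_left, mul1_zero_left, add_zero]
        show (0 : CD n) = s • (0 : CD n)
        rw [smul_zero]

end CD
namespace CD
open symmDiff

/-- Coordinate extraction. -/
def coord : (n : ℕ) → Finset ℕ → CD n → ℝ
  | 0, _, x => x
  | n+1, γ, x => if n+1 ∈ γ then coord n (γ.erase (n+1)) x.2 else coord n γ x.1

theorem coord_add : ∀ n, ∀ γ : Finset ℕ, ∀ x y : CD n,
    coord n γ (x + y) = coord n γ x + coord n γ y := by
  intro n
  induction n with
  | zero => intro γ x y; rfl
  | succ n ih =>
    intro γ x y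
    by_cases h : n + 1 ∈ γ <;> simp only [coord, if_pos, if_neg, h, if_true, if_false]
    · exact ih _ x.2 y.2
    · exact ih _ x.1 y.1

theorem coord_smul : ∀ n, ∀ γ : Finset ℕ, ∀ (r : ℝ), ∀ x : CD n,
    coord n γ (r • x) = r * coord n γ x := by
  intro n
  induction n with
  | zero => intro γ r x; rfl
  | succ n ih =>
    intro γ r x
    by_cases h : n + 1 ∈ γ <;> simp only [coord, if_pos, if_neg, h, if_true, if_false]
    · exact ih _ r x.2
    · exact ih _ r x.1

theorem coord_zero (n : ℕ) (γ : Finset ℕ) : coord n γ (0 : CD n) = 0 := by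
  have := coord_smul n γ 0 0; simpa using this

theorem coord_basis : ∀ n, ∀ γ δ : Finset ℕ, γ ⊆ Finset.Icc 1 n → δ ⊆ Finset.Icc 1 n →
    coord n γ (basis n δ) = if γ = δ then 1 else 0 := by
  intro n
  induction n with
  | zero =>
    intro γ δ hγ hδ
    simp at hγ hδ
    subst hγ; subst hδ
    simp [coord, basis]
  | succ n ih =>
    intro γ δ hγ hδ
    have hγ' : ∀ a ∈ γ, a ≤ n + 1 ∧ 1 ≤ a := by
      intro a ha; have := hγ ha; simp only [Finset.mem_Icc] at this; omega
    have hδ' : ∀ a ∈ δ, a ≤ n + 1 ∧ 1 ≤ a := by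
      intro a ha; have := hδ ha; simp only [Finset.mem_Icc] at this; omega
    by_cases hG : n + 1 ∈ γ <;> by_cases hD : n + 1 ∈ δ
    · have hGe : γ.erase (n+1) ⊆ Finset.Icc 1 n := by
        intro a ha
        have h1 := Finset.mem_of_mem_erase ha
        have h2 := Finset.ne_of_mem_erase ha
        have := hγ' a h1; simp only [Finset.mem_Icc]; omega
      have hDe : δ.erase (n+1) ⊆ Finset.Icc 1 n := by
        intro a ha
        have h1 := Finset.mem_of_mem_erase ha
        have h2 := Finset.ne_of_mem_erase ha
        have := hδ' a h1; simp only [Finset.mem_Icc]; omega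
      rw [basis_succ_mem n δ hD]
      simp only [coord, if_pos hG]
      rw [ih _ _ hGe hDe]
      have : γ = δ ↔ γ.erase (n+1) = δ.erase (n+1) := by
        constructor
        · intro h; rw [h]
        · intro h
          ext a
          by_cases ha : a = n + 1
          · subst ha; simp [hG, hD]
          · constructor <;> intro hm
            · exact Finset.mem_of_mem_erase (h ▸ Finset.mem_erase.mpr ⟨ha, hm⟩)
            · exact Finset.mem_of_mem_erase (h ▸ Finset.mem_erase.mpr ⟨ha, hm⟩)
      simp only [this]
    · rw [basis_succ_not_mem n δ hD]
      simp only [coord, if_pos hG]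
      have : coord n (γ.erase (n+1)) (0 : CD n) = 0 := coord_zero n _
      rw [this]
      have : γ ≠ δ := fun h => hD (h ▸ hG)
      simp [this]
    · rw [basis_succ_mem n δ hD]
      simp only [coord, if_neg hG]
      rw [coord_zero]
      have : γ ≠ δ := fun h => hG (h ▸ hD)
      simp [this]
    · have hGs : γ ⊆ Finset.Icc 1 n := by
        intro a ha
        have := hγ' a ha
        have : a ≠ n + 1 := fun hh => hG (hh ▸ ha)
        simp only [Finset.mem_Icc]
        have := hγ' a ha; omega
      have hDs : δ ⊆ Finset.Icc 1 n := by
        intro a ha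
        have := hδ' a ha
        have : a ≠ n + 1 := fun hh => hD (hh ▸ ha)
        simp only [Finset.mem_Icc]
        have := hδ' a ha; omega
      rw [basis_succ_not_mem n δ hD]
      simp only [coord, if_neg hG]
      exact ih _ _ hGs hDs

theorem anticomm (n : ℕ) (α β : Finset ℕ) (hα : CD.IsPure n α) (hβ : CD.IsPure n β)
    (hne : α ≠ β) :
    mul1 n (basis n β) (basis n α) = -mul1 n (basis n α) (basis n β) := by
  obtain ⟨s, hs, hmul⟩ := basis_mul_basis n α β hα.2 hβ.2
  have hsd : (α ∆ β).Nonempty := by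
    rcases Finset.eq_empty_or_nonempty (α ∆ β) with h | h
    · exfalso
      apply hne
      have := symmDiff_eq_bot.mp h
      exact this
    · exact h
  have hsdsub : α ∆ β ⊆ Finset.Icc 1 n := by
    intro a ha
    rw [Finset.mem_symmDiff] at ha
    rcases ha with ⟨h1, _⟩ | ⟨h1, _⟩
    · exact hα.2 h1
    · exact hβ.2 h1
  have h1 : conj n (mul1 n (basis n α) (basis n β)) = -(mul1 n (basis n α) (basis n β)) := by
    rw [hmul, conj_smul, conj_basis_pure n _ hsd hsdsub, smul_neg]
  have h2 : conj n (mul1 n (basis n α) (basis n β)) =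
      mul1 n (basis n β) (basis n α) := by
    rw [conj_mul1, conj_basis_pure n α hα.1 hα.2, conj_basis_pure n β hβ.1 hβ.2,
      mul1_neg_left, mul1_neg_right, neg_neg]
  rw [← h2, h1]

end CD

open symmDiff in
/-- (Generalised Artin theorem.) For `n ≥ 2` and distinct pure
basis elements `b, c`, the span of `{1, b, c, b·c}` is closed under multiplication,
is ℝ-linearly multiplicatively isomorphic to the quaternions `ℍ`, and is
associative. -/
theorem stmt8 (n : ℕ) (hn : 2 ≤ n) (α β : Finset ℕ) (hα : CD.IsPure n α)
    (hβ : CD.IsPure n β) (hne : α ≠ β) (b c : CD n) (hb : b = CD.basis n α)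
    (hc : c = CD.basis n β) :
    (∀ x ∈ Submodule.span ℝ {CD.one n, b, c, CD.mul1 n b c},
      ∀ y ∈ Submodule.span ℝ {CD.one n, b, c, CD.mul1 n b c},
        CD.mul1 n x y ∈ Submodule.span ℝ {CD.one n, b, c, CD.mul1 n b c}) ∧
    (∃ f : (Submodule.span ℝ {CD.one n, b, c, CD.mul1 n b c} :
        Submodule ℝ (CD n)) →ₗ[ℝ] Quaternion ℝ,
      Function.Bijective f ∧
      f ⟨CD.one n, Submodule.subset_span (Set.mem_insert _ _)⟩ = 1 ∧
      ∀ x y z : (Submodule.span ℝ {CD.one n, b, c, CD.mul1 n b c} :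
          Submodule ℝ (CD n)),
        CD.mul1 n x.1 y.1 = z.1 → f z = f x * f y) ∧
    (∀ x ∈ Submodule.span ℝ {CD.one n, b, c, CD.mul1 n b c},
      ∀ y ∈ Submodule.span ℝ {CD.one n, b, c, CD.mul1 n b c},
      ∀ z ∈ Submodule.span ℝ {CD.one n, b, c, CD.mul1 n b c},
        CD.mul1 n (CD.mul1 n x y) z = CD.mul1 n x (CD.mul1 n y z)) := by
  classical
  obtain ⟨hαne, hαsub⟩ := hα
  obtain ⟨hβne, hβsub⟩ := hβ
  set u : CD n := CD.mul1 n b c with hu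
  set γ : Finset ℕ := α ∆ β with hγdef
  have hγne : γ.Nonempty := by
    rcases Finset.eq_empty_or_nonempty γ with h | h
    · exact absurd (symmDiff_eq_bot.mp (by simpa using hγdef.symm.trans h)) hne
    · exact h
  have hγsub : γ ⊆ Finset.Icc 1 n := by
    intro a ha
    rw [hγdef, Finset.mem_symmDiff] at ha
    rcases ha with ⟨h1, _⟩ | ⟨h1, _⟩
    · exact hαsub h1
    · exact hβsub h1
  have hαγ : α ≠ γ := fun h =>
    hβne.ne_empty (by simpa using symmDiff_eq_left.mp (hγdef.symm.trans h.symm))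
  have hβγ : β ≠ γ := fun h =>
    hαne.ne_empty (by simpa using symmDiff_eq_right.mp (hγdef.symm.trans h.symm))
  have hαe : α ≠ ∅ := hαne.ne_empty
  have hβe : β ≠ ∅ := hβne.ne_empty
  have hγe : γ ≠ ∅ := hγne.ne_empty
  obtain ⟨s, hs, hmul⟩ := CD.basis_mul_basis n α β hαsub hβsub
  have hs0 : s ≠ 0 := by rcases hs with h | h <;> rw [h] <;> norm_num
  have hss : s * s = 1 := by rcases hs with h | h <;> rw [h] <;> norm_num
  have hu2 : u = s • CD.basis n γ := by rw [hu, hb, hc, hmul, hγdef]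
  -- multiplication table
  have hbb : CD.mul1 n b b = -(CD.one n) := by
    rw [hb]; exact CD.basis_sq n α hαne hαsub
  have hcc : CD.mul1 n c c = -(CD.one n) := by
    rw [hc]; exact CD.basis_sq n β hβne hβsub
  have hcb : CD.mul1 n c b = -u := by
    rw [hu, hb, hc]; exact CD.anticomm n α β ⟨hαne, hαsub⟩ ⟨hβne, hβsub⟩ hne
  have hbu : CD.mul1 n b u = -c := by
    rw [hu, hb, hc]; exact CD.mul1_basis_mul1 n α hαne hαsub (CD.basis n β)
  have huc : CD.mul1 n u c = -b := by
    rw [hu, hb, hc]; exact CD.mul1_mul1_basis n β hβne hβsub (CD.basis n α)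
  have hub : CD.mul1 n u b = c := by
    have h1 : CD.mul1 n u b = -CD.mul1 n b u := by
      rw [hu2, hb, CD.mul1_smul_left, CD.mul1_smul_right,
        CD.anticomm n α γ ⟨hαne, hαsub⟩ ⟨hγne, hγsub⟩ hαγ, smul_neg]
    rw [h1, hbu, neg_neg]
  have hcu : CD.mul1 n c u = b := by
    have h1 : CD.mul1 n c u = -CD.mul1 n u c := by
      rw [hu2, hc, CD.mul1_smul_right, CD.mul1_smul_left,
        CD.anticomm n γ β ⟨hγne, hγsub⟩ ⟨hβne, hβsub⟩ (Ne.symm hβγ), smul_neg]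
    rw [h1, huc, neg_neg]
  have huu : CD.mul1 n u u = -(CD.one n) := by
    rw [hu2, CD.mul1_smul_left, CD.mul1_smul_right, CD.basis_sq n γ hγne hγsub,
      smul_smul, hss, one_smul]
  -- the linear map G
  obtain ⟨G, hGdef⟩ : ∃ G : Quaternion ℝ →ₗ[ℝ] CD n, ∀ q : Quaternion ℝ,
      G q = q.re • CD.one n + q.imI • b + q.imJ • c + q.imK • u := by
    refine ⟨{ toFun := fun q => q.re • CD.one n + q.imI • b + q.imJ • c + q.imK • u,
              map_add' := ?_, map_smul' := ?_ }, fun q => rfl⟩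
    · intro p q
      simp only [Quaternion.re_add, Quaternion.imI_add, Quaternion.imJ_add,
        Quaternion.imK_add, add_smul]
      abel
    · intro r q
      simp only [Quaternion.re_smul, Quaternion.imI_smul, Quaternion.imJ_smul,
        Quaternion.imK_smul, smul_eq_mul, RingHom.id_apply, smul_add, mul_smul]
  -- multiplicativity of G
  have hGmul : ∀ p q : Quaternion ℝ, CD.mul1 n (G p) (G q) = G (p * q) := by
    intro p q
    rw [hGdef, hGdef, hGdef]
    simp only [CD.mul1_add_left, CD.mul1_add_right, CD.mul1_smul_left, CD.mul1_smul_right,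
      hbb, hcc, huu, hcb, hbu, huc, hub, hcu, ← hu, CD.one_mul1', CD.mul1_one',
      Quaternion.re_mul, Quaternion.imI_mul, Quaternion.imJ_mul, Quaternion.imK_mul]
    match_scalars <;> ring
  -- injectivity of G via coordinates
  have hcoordG : ∀ δ : Finset ℕ, δ ⊆ Finset.Icc 1 n → ∀ q : Quaternion ℝ,
      CD.coord n δ (G q) = q.re * (if δ = ∅ then 1 else 0) +
        q.imI * (if δ = α then 1 else 0) + q.imJ * (if δ = β then 1 else 0) +
        q.imK * (s * (if δ = γ then 1 else 0)) := by
    intro δ hδ q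
    rw [hGdef, CD.coord_add, CD.coord_add, CD.coord_add, CD.coord_smul, CD.coord_smul,
      CD.coord_smul, CD.coord_smul, show CD.one n = CD.basis n ∅ from (CD.basis_empty n).symm,
      hb, hc, hu2, CD.coord_smul,
      CD.coord_basis n δ ∅ hδ (Finset.empty_subset _),
      CD.coord_basis n δ α hδ hαsub, CD.coord_basis n δ β hδ hβsub,
      CD.coord_basis n δ γ hδ hγsub]
  have hGzero : ∀ q : Quaternion ℝ, G q = 0 → q = 0 := by
    intro q hq
    have h1 := hcoordG ∅ (Finset.empty_subset _) q
    have h2 := hcoordG α hαsub q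
    have h3 := hcoordG β hβsub q
    have h4 := hcoordG γ hγsub q
    rw [hq, CD.coord_zero] at h1 h2 h3 h4
    have hre : q.re = 0 := by
      simpa [Ne.symm hαe, Ne.symm hβe, Ne.symm hγe] using h1.symm
    have himI : q.imI = 0 := by
      simpa [hαe, hne, hαγ] using h2.symm
    have himJ : q.imJ = 0 := by
      simpa [hβe, Ne.symm hne, hβγ] using h3.symm
    have himK : q.imK = 0 := by
      have h4' : q.imK * s = 0 := by
        simpa [hγe, Ne.symm hαγ, Ne.symm hβγ] using h4.symm
      rcases mul_eq_zero.mp h4' with h | h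
      · exact h
      · exact absurd h hs0
    apply Quaternion.ext <;> simp [hre, himI, himJ, himK] <;> rfl
  have hGinj : Function.Injective G := by
    intro p q h
    have h0 : G (p - q) = 0 := by rw [map_sub, h, sub_self]
    exact sub_eq_zero.mp (hGzero _ h0)
  -- range of G
  have hrange : LinearMap.range G = Submodule.span ℝ {CD.one n, b, c, u} := by
    apply le_antisymm
    · rintro x ⟨q, rfl⟩
      rw [hGdef]
      refine Submodule.add_mem _ (Submodule.add_mem _ (Submodule.add_mem _ ?_ ?_) ?_) ?_ <;>
        refine Submodule.smul_mem _ _ (Submodule.subset_span ?_) <;> simp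
    · rw [Submodule.span_le]
      intro x hx
      simp only [Set.mem_insert_iff, Set.mem_singleton_iff] at hx
      simp only [SetLike.mem_coe, LinearMap.mem_range]
      rcases hx with h | h | h | h
      · refine ⟨(⟨1, 0, 0, 0⟩ : Quaternion ℝ), ?_⟩
        erw [hGdef, h]
        show (1:ℝ) • CD.one n + (0:ℝ) • b + (0:ℝ) • c + (0:ℝ) • u = CD.one n
        simp
      · refine ⟨(⟨0, 1, 0, 0⟩ : Quaternion ℝ), ?_⟩
        erw [hGdef, h]
        show (0:ℝ) • CD.one n + (1:ℝ) • b + (0:ℝ) • c + (0:ℝ) • u = b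
        simp
      · refine ⟨(⟨0, 0, 1, 0⟩ : Quaternion ℝ), ?_⟩
        erw [hGdef, h]
        show (0:ℝ) • CD.one n + (0:ℝ) • b + (1:ℝ) • c + (0:ℝ) • u = c
        simp
      · refine ⟨(⟨0, 0, 0, 1⟩ : Quaternion ℝ), ?_⟩
        erw [hGdef, h]
        show (0:ℝ) • CD.one n + (0:ℝ) • b + (0:ℝ) • c + (1:ℝ) • u = u
        simp
  -- the linear equivalence
  let e1 : Quaternion ℝ ≃ₗ[ℝ] LinearMap.range G := LinearEquiv.ofInjective G hGinj
  let e2 : (LinearMap.range G : Submodule ℝ (CD n)) ≃ₗ[ℝ]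
      (Submodule.span ℝ {CD.one n, b, c, u} : Submodule ℝ (CD n)) :=
    LinearEquiv.ofEq _ _ hrange
  let E := e1.trans e2
  have hE : ∀ p : Quaternion ℝ, ((E p : CD n)) = G p := by
    intro p
    simp [E, e1, e2]
  have hE' : ∀ x : (Submodule.span ℝ {CD.one n, b, c, u} : Submodule ℝ (CD n)),
      G (E.symm x) = (x : CD n) := by
    intro x
    rw [← hE (E.symm x), E.apply_symm_apply]
  refine ⟨?_, ⟨(E.symm : _ →ₗ[ℝ] _), E.symm.bijective, ?_, ?_⟩, ?_⟩
  · -- closure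
    intro x hx y hy
    rw [← hrange] at hx hy ⊢
    obtain ⟨p, rfl⟩ := hx
    obtain ⟨q, rfl⟩ := hy
    exact ⟨p * q, (hGmul p q).symm⟩
  · -- unit
    show E.symm ⟨CD.one n, _⟩ = 1
    rw [LinearEquiv.symm_apply_eq]
    refine Subtype.ext ?_
    show CD.one n = (E 1 : CD n)
    rw [hE, hGdef]
    show CD.one n = (1:ℝ) • CD.one n + (0:ℝ) • b + (0:ℝ) • c + (0:ℝ) • u
    simp
  · -- multiplicativity
    intro x y z hz
    simp only [LinearEquiv.coe_coe]
    rw [LinearEquiv.symm_apply_eq]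
    refine Subtype.ext ?_
    show (z : CD n) = (E (E.symm x * E.symm y) : CD n)
    rw [hE, ← hGmul, hE', hE']
    exact hz.symm
  · -- associativity
    intro x hx y hy z hz
    rw [← hrange] at hx hy hz
    obtain ⟨p, rfl⟩ := hx
    obtain ⟨q, rfl⟩ := hy
    obtain ⟨r, rfl⟩ := hz
    rw [hGmul, hGmul, hGmul, hGmul, mul_assoc]
end
end
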